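/- The inequality η ≥ max{(uᵀy)², (uᵀy)²/(∑ᵢ xᵢ)} is valid for the set X_{R1} = {(x,y,η) ∈ {0,1}ⁿ × ℝⁿ⁺¹ : η ≥ (uᵀy)², yᵢ(1-xᵢ) = 0 for all i}; that is, every point of X_{R1} satisfies it (interpreting (uᵀy)²/0 as 0 when uᵀy = 0 and +∞ otherwise). -/
import Mathlib


/-- The rank-one inequality `η ≥ max{(uᵀy)², (uᵀy)²/(∑ᵢ xᵢ)}` is valid for
the set `X_{R1}` of points with binary `x`, `η ≥ (uᵀy)²` and complementarity
`yᵢ(1-xᵢ) = 0`, with the perspective term extended by closure at `∑xᵢ = 0`. -/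
theorem rank_one_inequality_valid (n : ℕ) (u x y : Fin n → ℝ) (η : ℝ)
    (hx : ∀ i, x i = 0 ∨ x i = 1)
    (hη : (∑ i, u i * y i) ^ 2 ≤ η)
    (hcomp : ∀ i, y i * (1 - x i) = 0) :
    max (((∑ i, u i * y i) ^ 2 : ℝ) : EReal)
      (if 0 < ∑ i, x i then (((∑ i, u i * y i) ^ 2 / ∑ i, x i : ℝ) : EReal)
       else if (∑ i, u i * y i) = 0 then 0 else ⊤) ≤ (η : EReal) := by
  have hxnn : ∀ i, (0:ℝ) ≤ x i := by
    intro i; rcases hx i with h | h <;> simp [h]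
  by_cases hs : 0 < ∑ i, x i
  · have hs1 : (1:ℝ) ≤ ∑ i, x i := by
      have : ∃ i, x i = 1 := by
        by_contra h
        push_neg at h
        have : ∀ i, x i = 0 := fun i => (hx i).resolve_right (h i)
        simp [this] at hs
      obtain ⟨i, this⟩ := this
      calc (1:ℝ) = x i := this.symm
        _ ≤ ∑ j, x j := Finset.single_le_sum (fun j _ => hxnn j) (Finset.mem_univ i)
    have hdiv : (∑ i, u i * y i) ^ 2 / ∑ i, x i ≤ (∑ i, u i * y i) ^ 2 :=
      div_le_self (sq_nonneg _) hs1
    simp only [if_pos hs, max_le_iff]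
    constructor <;> exact_mod_cast (by linarith : _ ≤ η)
  · have hzero : ∀ i, x i = 0 := by
      intro i
      by_contra h
      have : x i = 1 := (hx i).resolve_left h
      have : (1:ℝ) ≤ ∑ j, x j := by
        calc (1:ℝ) = x i := this.symm
          _ ≤ ∑ j, x j := Finset.single_le_sum (fun j _ => hxnn j) (Finset.mem_univ i)
      linarith
    have hy : ∀ i, y i = 0 := by
      intro i
      have := hcomp i
      rw [hzero i] at this
      simpa using this
    have hsum : (∑ i, u i * y i) = 0 := by simp [hy]
    have hη0 : (0:ℝ) ≤ η := by nlinarith [sq_nonneg (∑ i, u i * y i)]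
    simp only [if_neg hs, if_pos hsum, hsum, max_le_iff]
    constructor
    · exact_mod_cast (by simpa [hsum] using hη : (0:ℝ)^2 ≤ η)
    · simpa using (show ((0:ℝ):EReal) ≤ (η:ℝ) from by exact_mod_cast hη0)
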